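/- Let B₁ be a real m×n matrix and B₂ be a real n×p matrix with B₁B₂ = 0, let L = B₁ᵀB₁ + B₂B₂ᵀ, and let H = Σ_{l=0}^{L₁} α_l (B₁ᵀB₁)^l + Σ_{l=0}^{L₂} β_l (B₂B₂ᵀ)^l be a simplicial convolutional filter. If v ∈ ℝⁿ lies in the gradient subspace, i.e. v = B₁ᵀw for some w ∈ ℝᵐ, and v is an eigenvector of L with Lv = λ·v, then Hv = (β₀ + Σ_{l=0}^{L₁} α_l λ^l)·v. -/
import Mathlib


open Matrix Finset

lemma sum_mulVec' {n k : ℕ} {ι : Type*} (s : Finset ι) (f : ι → Matrix (Fin n) (Fin k) ℝ)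
    (v : Fin k → ℝ) : (∑ i ∈ s, f i).mulVec v = ∑ i ∈ s, (f i).mulVec v := by
  induction s using Finset.cons_induction with
  | empty => simp [Matrix.zero_mulVec]
  | cons a s ha ih => rw [Finset.sum_cons, Finset.sum_cons, Matrix.add_mulVec, ih]

/-- A simplicial convolutional filter built from incidence matrices `B₁`, `B₂`:
`H = Σ_{l=0}^{L₁} α l • (B₁ᵀB₁)^l + Σ_{l=0}^{L₂} β l • (B₂B₂ᵀ)^l`. -/
noncomputable def scFilter {m n p : ℕ} (B₁ : Matrix (Fin m) (Fin n) ℝ)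
    (B₂ : Matrix (Fin n) (Fin p) ℝ) (L₁ L₂ : ℕ) (α β : ℕ → ℝ) :
    Matrix (Fin n) (Fin n) ℝ :=
  (∑ l ∈ Finset.range (L₁ + 1), α l • (B₁ᵀ * B₁) ^ l)
    + ∑ l ∈ Finset.range (L₂ + 1), β l • (B₂ * B₂ᵀ) ^ l

theorem filter_response_gradient
    {m n p : ℕ} (B₁ : Matrix (Fin m) (Fin n) ℝ) (B₂ : Matrix (Fin n) (Fin p) ℝ)
    (hB : B₁ * B₂ = 0) (L₁ L₂ : ℕ) (α β : ℕ → ℝ) (v : Fin n → ℝ)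
    (w : Fin m → ℝ) (hv : v = B₁ᵀ.mulVec w) (lam : ℝ)
    (heig : (B₁ᵀ * B₁ + B₂ * B₂ᵀ).mulVec v = lam • v) :
    (scFilter B₁ B₂ L₁ L₂ α β).mulVec v =
      (β 0 + ∑ l ∈ Finset.range (L₁ + 1), α l * lam ^ l) • v := by
  have hB2v : B₂ᵀ.mulVec v = 0 := by
    rw [hv, Matrix.mulVec_mulVec, ← Matrix.transpose_mul, hB, Matrix.transpose_zero,
      Matrix.zero_mulVec]
  have hlow : (B₂ * B₂ᵀ).mulVec v = 0 := by
    rw [← Matrix.mulVec_mulVec, hB2v, Matrix.mulVec_zero]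
  have hup : (B₁ᵀ * B₁).mulVec v = lam • v := by
    have := heig
    rwa [Matrix.add_mulVec, hlow, add_zero] at this
  have hupl : ∀ l : ℕ, ((B₁ᵀ * B₁) ^ l).mulVec v = lam ^ l • v := by
    intro l
    induction l with
    | zero => simp
    | succ k ih =>
      rw [pow_succ, ← Matrix.mulVec_mulVec, hup, Matrix.mulVec_smul, ih, smul_smul,
        ← pow_succ']
  have hlowl : ∀ l : ℕ, 1 ≤ l → ((B₂ * B₂ᵀ) ^ l).mulVec v = 0 := by
    intro l hl
    obtain ⟨k, rfl⟩ := Nat.exists_eq_add_of_le hl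
    rw [add_comm, pow_succ, ← Matrix.mulVec_mulVec, hlow, Matrix.mulVec_zero]
  rw [scFilter, Matrix.add_mulVec, sum_mulVec', sum_mulVec']
  have h1 : ∑ l ∈ Finset.range (L₁ + 1), (α l • (B₁ᵀ * B₁) ^ l).mulVec v
      = (∑ l ∈ Finset.range (L₁ + 1), α l * lam ^ l) • v := by
    rw [Finset.sum_smul]
    refine Finset.sum_congr rfl fun l _ => ?_
    rw [Matrix.smul_mulVec, hupl l, smul_smul]
  have h2 : ∑ l ∈ Finset.range (L₂ + 1), (β l • (B₂ * B₂ᵀ) ^ l).mulVec v = β 0 • v := by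
    rw [Finset.sum_range_succ']
    simp only [Matrix.smul_mulVec]
    rw [Finset.sum_eq_zero, zero_add, pow_zero, Matrix.one_mulVec]
    intro l _
    rw [hlowl (l + 1) (Nat.succ_le_succ (Nat.zero_le l)), smul_zero]
  rw [h1, h2, add_comm, ← add_smul]
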